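/- For every φ ∈ L^p(Ω_ε) with 1 ≤ p < ∞, T_ε(φ) ∈ L^p(ω × Y*) and ‖T_ε(φ)‖_{L^p(ω×Y*)} = (L₁L₂)^{1/p} · ε^{-1/p} ‖φ‖_{L^p(Ω⁰_ε)} ≤ (L₁L₂)^{1/p} · ε^{-1/p} ‖φ‖_{L^p(Ω_ε)}. -/

import Mathlib

open MeasureTheory Set Filter
open scoped Classical
noncomputable section

abbrev V3 := Fin 3 → ℝ
abbrev V2 := Fin 2 → ℝ

/-- Partial derivative in direction `i` of a scalar function on `ℝ³`. -/
def pd3 (i : Fin 3) (f : V3 → ℝ) (x : V3) : ℝ := fderiv ℝ f x (Pi.single i 1)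

/-- Partial derivative in direction `i` of a scalar function on `ℝ²`. -/
def pd2 (i : Fin 2) (f : V2 → ℝ) (x : V2) : ℝ := fderiv ℝ f x (Pi.single i 1)

/-- Squared euclidean norm of a vector field at a point. -/
def vnormSq (u : V3 → V3) (x : V3) : ℝ := ∑ i, (u x i) ^ 2

/-- Squared Frobenius norm of the gradient matrix of a vector field. -/
def gradSq (u : V3 → V3) (x : V3) : ℝ := ∑ i, ∑ j, (pd3 j (fun z => u z i) x) ^ 2

/-- Pointwise Frobenius norm `|∇u|`. -/
def gradNorm (u : V3 → V3) (x : V3) : ℝ := Real.sqrt (gradSq u x)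

/-- Pointwise inner product `∇u · ∇v` of two gradient matrices. -/
def gradInner (u v : V3 → V3) (x : V3) : ℝ :=
  ∑ i, ∑ j, pd3 j (fun z => u z i) x * pd3 j (fun z => v z i) x

/-- Divergence of a vector field. -/
def divg (u : V3 → V3) (x : V3) : ℝ := ∑ i, pd3 i (fun z => u z i) x

/-- The unit square `ω = (0,1)²`. -/
def omega2 : Set V2 := {x | 0 < x 0 ∧ x 0 < 1 ∧ 0 < x 1 ∧ x 1 < 1}

/-- Horizontal projection `x̂` of a point of `ℝ³`. -/
def hat (x : V3) : V2 := ![x 0, x 1]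

/-- The thin domain `Ω_ε = {(x̂,x₃) : x̂ ∈ ω, 0 < x₃ < εG(x̂/ε)}`. -/
def thinDom (ε : ℝ) (G : V2 → ℝ) : Set V3 :=
  {x | hat x ∈ omega2 ∧ 0 < x 2 ∧ x 2 < ε * G ![x 0 / ε, x 1 / ε]}

/-- The basic cell `Y* = {(ŷ,y₃) : ŷ ∈ (0,L₁)×(0,L₂), 0 < y₃ < G(ŷ)}`. -/
def Ystar (L1 L2 : ℝ) (G : V2 → ℝ) : Set V3 :=
  {y | 0 < y 0 ∧ y 0 < L1 ∧ 0 < y 1 ∧ y 1 < L2 ∧ 0 < y 2 ∧ y 2 < G ![y 0, y 1]}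

/-- `Y`-periodicity of `G` with periods `L₁, L₂`. -/
def Yper (L1 L2 : ℝ) (G : V2 → ℝ) : Prop :=
  ∀ (y : V2) (k : Fin 2 → ℤ), G (fun i => y i + (k i : ℝ) * ![L1, L2] i) = G y

/-- The `ε`-cell containing `x̂` is entirely included in `ω=(0,1)²` (that is, `x̂ ∈ ω^ε`). -/
def cellOK (ε L1 L2 : ℝ) (xh : V2) : Prop :=
  0 ≤ ⌊xh 0 / (ε * L1)⌋ ∧ 0 ≤ ⌊xh 1 / (ε * L2)⌋ ∧
    ε * L1 * ((⌊xh 0 / (ε * L1)⌋ : ℝ) + 1) ≤ 1 ∧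
    ε * L2 * ((⌊xh 1 / (ε * L2)⌋ : ℝ) + 1) ≤ 1

/-- The unfolding operator `T_ε(φ)(x̂,y) = φ(ε[x̂/ε]_L L + εŷ, εy₃)` on `ω^ε × Y*`, `0` on `Λ^ε × Y*`. -/
def Tunf (ε L1 L2 : ℝ) (φ : V3 → ℝ) (xh : V2) (y : V3) : ℝ :=
  if cellOK ε L1 L2 xh then
    φ ![ε * ((⌊xh 0 / (ε * L1)⌋ : ℝ) * L1 + y 0),
        ε * ((⌊xh 1 / (ε * L2)⌋ : ℝ) * L2 + y 1), ε * y 2]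
  else 0

/-- Union of the cells entirely included in `Ω_ε`. -/
def thinDom0 (ε L1 L2 : ℝ) (G : V2 → ℝ) : Set V3 :=
  {x ∈ thinDom ε G | cellOK ε L1 L2 (hat x)}
namespace UnfoldAux

/-- Pair of floor indices of a horizontal point. -/
def kfun (ε L1 L2 : ℝ) (xh : V2) : ℤ × ℤ := (⌊xh 0 / (ε * L1)⌋, ⌊xh 1 / (ε * L2)⌋)

/-- Admissibility of a cell index. -/
def adm (ε L1 L2 : ℝ) (n : ℤ × ℤ) : Prop :=
  0 ≤ n.1 ∧ 0 ≤ n.2 ∧ ε * L1 * ((n.1 : ℝ) + 1) ≤ 1 ∧ ε * L2 * ((n.2 : ℝ) + 1) ≤ 1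

instance (ε L1 L2 : ℝ) (n : ℤ × ℤ) : Decidable (adm ε L1 L2 n) := by
  unfold adm; infer_instance

/-- The affine map from the reference cell to the `n`-th `ε`-cell. -/
def Fmap (ε L1 L2 : ℝ) (n : ℤ × ℤ) (y : V3) : V3 :=
  ![ε * ((n.1 : ℝ) * L1 + y 0), ε * ((n.2 : ℝ) * L2 + y 1), ε * y 2]

/-- The image of `Y*` in the `n`-th cell, described by inequalities. -/
def Scell (ε L1 L2 : ℝ) (G : V2 → ℝ) (n : ℤ × ℤ) : Set V3 :=
  {x | ε * L1 * (n.1 : ℝ) < x 0 ∧ x 0 < ε * L1 * ((n.1 : ℝ) + 1) ∧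
    ε * L2 * (n.2 : ℝ) < x 1 ∧ x 1 < ε * L2 * ((n.2 : ℝ) + 1) ∧
    0 < x 2 ∧ x 2 < ε * G ![x 0 / ε, x 1 / ε]}

def Sc (ε L1 L2 : ℝ) (G : V2 → ℝ) (n : ℤ × ℤ) : Set V3 :=
  if adm ε L1 L2 n then Scell ε L1 L2 G n else ∅

def D0 (ε L1 L2 : ℝ) (G : V2 → ℝ) : Set V3 := ⋃ n : ℤ × ℤ, Sc ε L1 L2 G n

/-- The `n`-th horizontal half-open cell. -/
def Icell (ε L1 L2 : ℝ) (n : ℤ × ℤ) : Set V2 :=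
  {xh | ε * L1 * (n.1 : ℝ) ≤ xh 0 ∧ xh 0 < ε * L1 * ((n.1 : ℝ) + 1) ∧
    ε * L2 * (n.2 : ℝ) ≤ xh 1 ∧ xh 1 < ε * L2 * ((n.2 : ℝ) + 1)}

def Ic (ε L1 L2 : ℝ) (n : ℤ × ℤ) : Set V2 :=
  if adm ε L1 L2 n then Icell ε L1 L2 n else ∅

def OK (ε L1 L2 : ℝ) : Set V2 := {xh | cellOK ε L1 L2 xh}

variable {ε L1 L2 : ℝ} {G : V2 → ℝ}

lemma cellOK_iff (xh : V2) : cellOK ε L1 L2 xh ↔ adm ε L1 L2 (kfun ε L1 L2 xh) := Iff.rfl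

lemma Tunf_eq (φ : V3 → ℝ) (xh : V2) (y : V3) :
    Tunf ε L1 L2 φ xh y =
      if cellOK ε L1 L2 xh then φ (Fmap ε L1 L2 (kfun ε L1 L2 xh) y) else 0 := by
  simp only [Tunf, Fmap, kfun, mul_add]

lemma kfun_eq_of_mem_Icell (hε : 0 < ε) (hL1 : 0 < L1) (hL2 : 0 < L2) {n : ℤ × ℤ} {xh : V2}
    (h : xh ∈ Icell ε L1 L2 n) : kfun ε L1 L2 xh = n := by
  obtain ⟨h1, h2, h3, h4⟩ := h
  have hc1 : 0 < ε * L1 := by positivity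
  have hc2 : 0 < ε * L2 := by positivity
  have e1 : ⌊xh 0 / (ε * L1)⌋ = n.1 := by
    rw [Int.floor_eq_iff]
    constructor
    · rw [le_div_iff₀ hc1]; linarith
    · rw [div_lt_iff₀ hc1]; linarith
  have e2 : ⌊xh 1 / (ε * L2)⌋ = n.2 := by
    rw [Int.floor_eq_iff]
    constructor
    · rw [le_div_iff₀ hc2]; linarith
    · rw [div_lt_iff₀ hc2]; linarith
  simp [kfun, e1, e2]

lemma kfun_eq_of_mem_Scell (hε : 0 < ε) (hL1 : 0 < L1) (hL2 : 0 < L2) {n : ℤ × ℤ} {x : V3}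
    (h : x ∈ Scell ε L1 L2 G n) : kfun ε L1 L2 (hat x) = n := by
  apply kfun_eq_of_mem_Icell hε hL1 hL2
  obtain ⟨h1, h2, h3, h4, -, -⟩ := h
  refine ⟨?_, ?_, ?_, ?_⟩ <;> simp [hat] <;> linarith

lemma mem_Icell_kfun (hε : 0 < ε) (hL1 : 0 < L1) (hL2 : 0 < L2) (xh : V2) :
    xh ∈ Icell ε L1 L2 (kfun ε L1 L2 xh) := by
  have hc1 : 0 < ε * L1 := by positivity
  have hc2 : 0 < ε * L2 := by positivity
  refine ⟨?_, ?_, ?_, ?_⟩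
  · calc ε * L1 * (⌊xh 0 / (ε * L1)⌋ : ℝ) ≤ ε * L1 * (xh 0 / (ε * L1)) := by
          exact mul_le_mul_of_nonneg_left (Int.floor_le _) hc1.le
      _ = xh 0 := by field_simp
  · have := Int.lt_floor_add_one (xh 0 / (ε * L1))
    calc xh 0 = ε * L1 * (xh 0 / (ε * L1)) := by field_simp
      _ < ε * L1 * ((⌊xh 0 / (ε * L1)⌋ : ℝ) + 1) := by
          exact mul_lt_mul_of_pos_left this hc1
  · calc ε * L2 * (⌊xh 1 / (ε * L2)⌋ : ℝ) ≤ ε * L2 * (xh 1 / (ε * L2)) := by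
          exact mul_le_mul_of_nonneg_left (Int.floor_le _) hc2.le
      _ = xh 1 := by field_simp
  · have := Int.lt_floor_add_one (xh 1 / (ε * L2))
    calc xh 1 = ε * L2 * (xh 1 / (ε * L2)) := by field_simp
      _ < ε * L2 * ((⌊xh 1 / (ε * L2)⌋ : ℝ) + 1) := by
          exact mul_lt_mul_of_pos_left this hc2

lemma OK_eq_iUnion (hε : 0 < ε) (hL1 : 0 < L1) (hL2 : 0 < L2) :
    OK ε L1 L2 = ⋃ n : ℤ × ℤ, Ic ε L1 L2 n := by
  ext xh
  simp only [OK, Set.mem_setOf_eq, Set.mem_iUnion]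
  constructor
  · intro h
    refine ⟨kfun ε L1 L2 xh, ?_⟩
    rw [Ic, if_pos ((cellOK_iff xh).mp h)]
    exact mem_Icell_kfun hε hL1 hL2 xh
  · rintro ⟨n, hn⟩
    rw [Ic] at hn
    split_ifs at hn with ha
    · rw [cellOK_iff, kfun_eq_of_mem_Icell hε hL1 hL2 hn]; exact ha
    · exact absurd hn (Set.notMem_empty _)

lemma Ic_disjoint (hε : 0 < ε) (hL1 : 0 < L1) (hL2 : 0 < L2) :
    Pairwise (Function.onFun Disjoint (Ic ε L1 L2)) := by
  intro n m hnm
  rw [Function.onFun, Set.disjoint_left]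
  intro xh hn hm
  rw [Ic] at hn hm
  split_ifs at hn hm
  · exact hnm ((kfun_eq_of_mem_Icell hε hL1 hL2 hn).symm.trans
      (kfun_eq_of_mem_Icell hε hL1 hL2 hm))
  all_goals simp_all

lemma Sc_disjoint (hε : 0 < ε) (hL1 : 0 < L1) (hL2 : 0 < L2) :
    Pairwise (Function.onFun Disjoint (Sc ε L1 L2 G)) := by
  intro n m hnm
  rw [Function.onFun, Set.disjoint_left]
  intro x hn hm
  rw [Sc] at hn hm
  split_ifs at hn hm
  · exact hnm ((kfun_eq_of_mem_Scell hε hL1 hL2 hn).symm.trans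
      (kfun_eq_of_mem_Scell hε hL1 hL2 hm))
  all_goals simp_all

end UnfoldAux
namespace UnfoldAux

open scoped ENNReal NNReal

variable {ε L1 L2 : ℝ} {G : V2 → ℝ}

lemma isOpen_Ystar (hGcont : Continuous G) : IsOpen (Ystar L1 L2 G) := by
  have h0 : Continuous fun y : V3 => y 0 := continuous_apply 0
  have h1 : Continuous fun y : V3 => y 1 := continuous_apply 1
  have h2 : Continuous fun y : V3 => y 2 := continuous_apply 2
  have hg : Continuous fun y : V3 => G ![y 0, y 1] := by
    apply hGcont.comp
    refine continuous_pi fun i => ?_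
    fin_cases i <;> simpa
  exact (isOpen_lt continuous_const h0).and ((isOpen_lt h0 continuous_const).and
    ((isOpen_lt continuous_const h1).and ((isOpen_lt h1 continuous_const).and
    ((isOpen_lt continuous_const h2).and (isOpen_lt h2 hg)))))

lemma isOpen_Scell (hGcont : Continuous G) (n : ℤ × ℤ) : IsOpen (Scell ε L1 L2 G n) := by
  have h0 : Continuous fun y : V3 => y 0 := continuous_apply 0
  have h1 : Continuous fun y : V3 => y 1 := continuous_apply 1
  have h2 : Continuous fun y : V3 => y 2 := continuous_apply 2
  have hg : Continuous fun x : V3 => ε * G ![x 0 / ε, x 1 / ε] := by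
    apply continuous_const.mul
    apply hGcont.comp
    refine continuous_pi fun i => ?_
    fin_cases i <;> simp <;> fun_prop
  exact (isOpen_lt continuous_const h0).and ((isOpen_lt h0 continuous_const).and
    ((isOpen_lt continuous_const h1).and ((isOpen_lt h1 continuous_const).and
    ((isOpen_lt continuous_const h2).and (isOpen_lt h2 hg)))))

lemma measurableSet_Icell (n : ℤ × ℤ) : MeasurableSet (Icell ε L1 L2 n) := by
  have h0 : Measurable fun y : V2 => y 0 := measurable_pi_apply 0
  have h1 : Measurable fun y : V2 => y 1 := measurable_pi_apply 1
  show MeasurableSet {xh : V2 | _ ∧ _ ∧ _ ∧ _}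
  exact (measurableSet_le measurable_const h0).inter ((measurableSet_lt h0 measurable_const).inter
    ((measurableSet_le measurable_const h1).inter (measurableSet_lt h1 measurable_const)))

lemma measurableSet_Ic (n : ℤ × ℤ) : MeasurableSet (Ic ε L1 L2 n) := by
  rw [Ic]; split_ifs
  · exact measurableSet_Icell n
  · exact MeasurableSet.empty

lemma measurableSet_Sc (hGcont : Continuous G) (n : ℤ × ℤ) :
    MeasurableSet (Sc ε L1 L2 G n) := by
  rw [Sc]; split_ifs
  · exact (isOpen_Scell hGcont n).measurableSet
  · exact MeasurableSet.empty

lemma measurableSet_OK (hε : 0 < ε) (hL1 : 0 < L1) (hL2 : 0 < L2) :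
    MeasurableSet (OK ε L1 L2) := by
  rw [OK_eq_iUnion hε hL1 hL2]
  exact MeasurableSet.iUnion fun n => measurableSet_Ic n

lemma measurable_kfun : Measurable (kfun ε L1 L2) := by
  apply Measurable.prod
  · exact ((measurable_pi_apply 0).div_const _).floor
  · exact ((measurable_pi_apply 1).div_const _).floor

/-- Membership transfer under the affine cell map, using periodicity. -/
lemma mem_Ystar_iff_Fmap (hε : 0 < ε) (hGper : Yper L1 L2 G) (n : ℤ × ℤ) (y : V3) :
    y ∈ Ystar L1 L2 G ↔ Fmap ε L1 L2 n y ∈ Scell ε L1 L2 G n := by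
  have e0 : Fmap ε L1 L2 n y 0 = ε * ((n.1 : ℝ) * L1 + y 0) := rfl
  have e1 : Fmap ε L1 L2 n y 1 = ε * ((n.2 : ℝ) * L2 + y 1) := rfl
  have e2 : Fmap ε L1 L2 n y 2 = ε * y 2 := rfl
  have hG : G ![Fmap ε L1 L2 n y 0 / ε, Fmap ε L1 L2 n y 1 / ε] = G ![y 0, y 1] := by
    have hper := hGper ![y 0, y 1] ![n.1, n.2]
    have : (fun i => (![y 0, y 1] : V2) i + ((![n.1, n.2] : Fin 2 → ℤ) i : ℝ) * ![L1, L2] i)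
        = ![Fmap ε L1 L2 n y 0 / ε, Fmap ε L1 L2 n y 1 / ε] := by
      funext i
      fin_cases i
      · simp [e0]; field_simp; ring
      · simp [e1]; field_simp; ring
    rw [this] at hper
    exact hper
  rw [e0, e1] at hG
  constructor
  · rintro ⟨a1, a2, a3, a4, a5, a6⟩
    simp only [Scell, Set.mem_setOf_eq, hG, e0, e1, e2]
    refine ⟨by nlinarith, by nlinarith, by nlinarith, by nlinarith, by nlinarith, by nlinarith⟩
  · intro h
    simp only [Scell, Set.mem_setOf_eq, hG, e0, e1, e2] at h
    obtain ⟨a1, a2, a3, a4, a5, a6⟩ := h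
    refine ⟨by nlinarith, by nlinarith, by nlinarith, by nlinarith, by nlinarith, by nlinarith⟩

lemma measurable_Fmap (n : ℤ × ℤ) : Measurable (Fmap ε L1 L2 n) := by
  refine measurable_pi_lambda _ fun i => ?_
  fin_cases i <;> simp [Fmap] <;> fun_prop

/-- Change of variables for the affine cell map. -/
lemma chg (hε : 0 < ε) (hGcont : Continuous G) (hGper : Yper L1 L2 G) (n : ℤ × ℤ)
    {f : V3 → ℝ≥0∞} (hf : Measurable f) :
    ∫⁻ y in Ystar L1 L2 G, f (Fmap ε L1 L2 n y) =
      (ENNReal.ofReal (ε ^ 3))⁻¹ * ∫⁻ x in Scell ε L1 L2 G n, f x := by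
  set v : V3 := ![ε * ((n.1 : ℝ) * L1), ε * ((n.2 : ℝ) * L2), 0] with hv
  have hFv : ∀ y : V3, Fmap ε L1 L2 n y = ε • y + v := by
    intro y
    funext i
    fin_cases i <;> simp [Fmap, hv] <;> ring
  have hmap : Measure.map (Fmap ε L1 L2 n) (volume : Measure V3)
      = (ENNReal.ofReal (ε ^ 3))⁻¹ • volume := by
    have : Fmap ε L1 L2 n = (fun z : V3 => z + v) ∘ (fun y : V3 => ε • y) := by
      funext y; exact hFv y
    rw [this, ← Measure.map_map (measurable_add_const v) (measurable_const_smul ε),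
      Measure.map_addHaar_smul volume (ne_of_gt hε), Measure.map_smul,
      map_add_right_eq_self]
    congr 1
    rw [abs_of_nonneg (by positivity)]
    rw [ENNReal.ofReal_inv_of_pos (by positivity)]
    congr 2
    simp [Module.finrank_fin_fun]
  have hind : ∀ y : V3, (Ystar L1 L2 G).indicator (fun y => f (Fmap ε L1 L2 n y)) y
      = (Scell ε L1 L2 G n).indicator f (Fmap ε L1 L2 n y) := by
    intro y
    by_cases hy : y ∈ Ystar L1 L2 G
    · rw [Set.indicator_of_mem hy,
        Set.indicator_of_mem ((mem_Ystar_iff_Fmap hε hGper n y).mp hy)]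
    · rw [Set.indicator_of_notMem hy, Set.indicator_of_notMem
        (fun h => hy ((mem_Ystar_iff_Fmap hε hGper n y).mpr h))]
  calc ∫⁻ y in Ystar L1 L2 G, f (Fmap ε L1 L2 n y)
      = ∫⁻ y, (Ystar L1 L2 G).indicator (fun y => f (Fmap ε L1 L2 n y)) y := by
        rw [lintegral_indicator (isOpen_Ystar hGcont).measurableSet]
    _ = ∫⁻ y, (Scell ε L1 L2 G n).indicator f (Fmap ε L1 L2 n y) := by
        simp_rw [hind]
    _ = ∫⁻ x, (Scell ε L1 L2 G n).indicator f x ∂(Measure.map (Fmap ε L1 L2 n) volume) := by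
        rw [lintegral_map (hf.indicator (isOpen_Scell hGcont n).measurableSet)
          (measurable_Fmap n)]
    _ = (ENNReal.ofReal (ε ^ 3))⁻¹ * ∫⁻ x in Scell ε L1 L2 G n, f x := by
        rw [hmap, lintegral_smul_measure,
          lintegral_indicator (isOpen_Scell hGcont n).measurableSet, smul_eq_mul]

end UnfoldAux
namespace UnfoldAux

open scoped ENNReal NNReal

variable {ε L1 L2 : ℝ} {G : V2 → ℝ}

lemma null_hyper3 (i : Fin 3) (a : ℝ) : volume {x : V3 | x i = a} = 0 := by
  have : {x : V3 | x i = a} = Set.pi Set.univ (fun j => if j = i then {a} else Set.univ) := by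
    ext x
    simp only [Set.mem_setOf_eq, Set.mem_univ_pi]
    constructor
    · intro h j; split_ifs with hj
      · simp [hj, h]
      · trivial
    · intro h; have := h i; simpa using this
  rw [this, volume_pi_pi]
  refine Finset.prod_eq_zero (Finset.mem_univ i) ?_
  simp

lemma null_hyper2 (i : Fin 2) (a : ℝ) : volume {x : V2 | x i = a} = 0 := by
  have : {x : V2 | x i = a} = Set.pi Set.univ (fun j => if j = i then {a} else Set.univ) := by
    ext x
    simp only [Set.mem_setOf_eq, Set.mem_univ_pi]
    constructor
    · intro h j; split_ifs with hj
      · simp [hj, h]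
      · trivial
    · intro h; have := h i; simpa using this
  rw [this, volume_pi_pi]
  refine Finset.prod_eq_zero (Finset.mem_univ i) ?_
  simp

lemma null_linesZ (i : Fin 3) (c : ℝ) : volume {x : V3 | ∃ m : ℤ, x i = c * (m : ℝ)} = 0 := by
  have hsub : {x : V3 | ∃ m : ℤ, x i = c * (m : ℝ)} ⊆ ⋃ m : ℤ, {x : V3 | x i = c * (m : ℝ)} := by
    rintro x ⟨m, hm⟩; exact Set.mem_iUnion.mpr ⟨m, hm⟩
  exact measure_mono_null hsub (measure_iUnion_null fun m => null_hyper3 i _)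

lemma volume_Icell (hε : 0 < ε) (hL1 : 0 < L1) (hL2 : 0 < L2) (n : ℤ × ℤ) :
    volume (Icell ε L1 L2 n) = ENNReal.ofReal (ε * L1) * ENNReal.ofReal (ε * L2) := by
  have : Icell ε L1 L2 n = Set.pi Set.univ
      (fun j : Fin 2 => Set.Ico (![ε * L1 * (n.1 : ℝ), ε * L2 * (n.2 : ℝ)] j)
        (![ε * L1 * ((n.1 : ℝ) + 1), ε * L2 * ((n.2 : ℝ) + 1)] j)) := by
    ext x
    simp only [Icell, Set.mem_setOf_eq, Set.mem_univ_pi]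
    constructor
    · rintro ⟨h1, h2, h3, h4⟩ j
      fin_cases j <;> simp [Set.mem_Ico] <;> constructor <;> assumption
    · intro h
      have h0 := h 0; have h1 := h 1
      simp [Set.mem_Ico] at h0 h1
      exact ⟨h0.1, h0.2, h1.1, h1.2⟩
  rw [this, volume_pi_pi]
  rw [Fin.prod_univ_two]
  simp only [Matrix.cons_val_zero, Matrix.cons_val_one, Matrix.head_cons, Real.volume_Ico]
  congr 1 <;> ring_nf

lemma measurable_Phi :
    Measurable fun q : V2 × V3 => Fmap ε L1 L2 (kfun ε L1 L2 q.1) q.2 := by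
  have hfl0 : Measurable fun q : V2 × V3 => ((⌊q.1 0 / (ε * L1)⌋ : ℤ) : ℝ) :=
    (measurable_of_countable _).comp
      ((((measurable_pi_apply 0).comp measurable_fst).div_const _).floor)
  have hfl1 : Measurable fun q : V2 × V3 => ((⌊q.1 1 / (ε * L2)⌋ : ℤ) : ℝ) :=
    (measurable_of_countable _).comp
      ((((measurable_pi_apply 1).comp measurable_fst).div_const _).floor)
  refine measurable_pi_lambda _ fun i => ?_
  fin_cases i
  · show Measurable fun q : V2 × V3 => ε * (((⌊q.1 0 / (ε * L1)⌋ : ℤ) : ℝ) * L1 + q.2 0)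
    exact (((hfl0.mul_const L1).add ((measurable_pi_apply 0).comp measurable_snd)).const_mul ε)
  · show Measurable fun q : V2 × V3 => ε * (((⌊q.1 1 / (ε * L2)⌋ : ℤ) : ℝ) * L2 + q.2 1)
    exact (((hfl1.mul_const L2).add ((measurable_pi_apply 1).comp measurable_snd)).const_mul ε)
  · show Measurable fun q : V2 × V3 => ε * q.2 2
    have : Measurable fun q : V2 × V3 => q.2 2 :=
      (measurable_pi_apply (2 : Fin 3)).comp measurable_snd
    exact this.const_mul ε

/-- Integrand of `T_ε` is measurable whenever `f` is. -/
lemma measurable_integrand (hε : 0 < ε) (hL1 : 0 < L1) (hL2 : 0 < L2)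
    {f : V3 → ℝ≥0∞} (hf : Measurable f) :
    Measurable fun q : V2 × V3 =>
      if cellOK ε L1 L2 q.1 then f (Fmap ε L1 L2 (kfun ε L1 L2 q.1) q.2) else 0 := by
  have hset : MeasurableSet {q : V2 × V3 | cellOK ε L1 L2 q.1} :=
    (measurableSet_OK hε hL1 hL2).preimage measurable_fst
  exact Measurable.ite hset (hf.comp measurable_Phi) measurable_const

end UnfoldAux
namespace UnfoldAux

open scoped ENNReal NNReal

variable {ε L1 L2 : ℝ} {G : V2 → ℝ}

lemma OK_bounds (hε : 0 < ε) (hL1 : 0 < L1) (hL2 : 0 < L2) {xh : V2} (h : xh ∈ OK ε L1 L2) :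
    0 ≤ xh 0 ∧ xh 0 < 1 ∧ 0 ≤ xh 1 ∧ xh 1 < 1 := by
  have hc1 : 0 < ε * L1 := by positivity
  have hc2 : 0 < ε * L2 := by positivity
  obtain ⟨m1, m2, m3, m4⟩ := mem_Icell_kfun hε hL1 hL2 xh
  obtain ⟨h1, h2, h3, h4⟩ := h
  have e1 : (0 : ℝ) ≤ ((kfun ε L1 L2 xh).1 : ℝ) := by exact_mod_cast h1
  have e2 : (0 : ℝ) ≤ ((kfun ε L1 L2 xh).2 : ℝ) := by exact_mod_cast h2
  have f1 : ε * L1 * (((kfun ε L1 L2 xh).1 : ℝ) + 1) ≤ 1 := h3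
  have f2 : ε * L2 * (((kfun ε L1 L2 xh).2 : ℝ) + 1) ≤ 1 := h4
  refine ⟨?_, ?_, ?_, ?_⟩ <;> nlinarith

lemma OK_ae_inter (hε : 0 < ε) (hL1 : 0 < L1) (hL2 : 0 < L2) :
    (OK ε L1 L2 ∩ omega2 : Set V2) =ᵐ[volume] OK ε L1 L2 := by
  rw [MeasureTheory.ae_eq_set]
  constructor
  · rw [Set.diff_eq_empty.mpr Set.inter_subset_left]; exact measure_empty
  · have hsub : OK ε L1 L2 \ (OK ε L1 L2 ∩ omega2) ⊆
        {xh : V2 | xh 0 = 0} ∪ {xh : V2 | xh 1 = 0} := by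
      rintro xh ⟨hOK, hno⟩
      obtain ⟨b0, b1, b2, b3⟩ := OK_bounds hε hL1 hL2 hOK
      simp only [Set.mem_union, Set.mem_setOf_eq]
      by_contra hcon
      push_neg at hcon
      obtain ⟨c0, c1⟩ := hcon
      exact hno ⟨hOK, lt_of_le_of_ne b0 (Ne.symm c0), b1, lt_of_le_of_ne b2 (Ne.symm c1), b3⟩
    exact measure_mono_null hsub
      (measure_union_null (null_hyper2 0 0) (null_hyper2 1 0))

/-- Main unfolding computation at the level of lower integrals. -/
lemma main_calc (hε : 0 < ε) (hL1 : 0 < L1) (hL2 : 0 < L2)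
    (hGcont : Continuous G) (hGper : Yper L1 L2 G)
    {f : V3 → ℝ≥0∞} (hf : Measurable f) :
    ∫⁻ q in omega2 ×ˢ Ystar L1 L2 G,
        (if cellOK ε L1 L2 q.1 then f (Fmap ε L1 L2 (kfun ε L1 L2 q.1) q.2) else 0)
      = ENNReal.ofReal (ε * L1) * ENNReal.ofReal (ε * L2) * (ENNReal.ofReal (ε ^ 3))⁻¹
          * ∫⁻ x in D0 ε L1 L2 G, f x := by
  set C : ℝ≥0∞ := ENNReal.ofReal (ε * L1) * ENNReal.ofReal (ε * L2)
    * (ENNReal.ofReal (ε ^ 3))⁻¹ with hC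
  have hinner : ∀ xh : V2,
      (∫⁻ y in Ystar L1 L2 G,
        (if cellOK ε L1 L2 xh then f (Fmap ε L1 L2 (kfun ε L1 L2 xh) y) else 0))
      = (OK ε L1 L2).indicator
          (fun xh => (ENNReal.ofReal (ε ^ 3))⁻¹
            * ∫⁻ x in Scell ε L1 L2 G (kfun ε L1 L2 xh), f x) xh := by
    intro xh
    by_cases h : cellOK ε L1 L2 xh
    · simp only [if_pos h]
      rw [chg hε hGcont hGper _ hf,
        Set.indicator_of_mem (show xh ∈ OK ε L1 L2 from h)]
    · simp only [if_neg h]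
      rw [Set.indicator_of_notMem (show xh ∉ OK ε L1 L2 from h)]
      simp
  calc ∫⁻ q in omega2 ×ˢ Ystar L1 L2 G,
        (if cellOK ε L1 L2 q.1 then f (Fmap ε L1 L2 (kfun ε L1 L2 q.1) q.2) else 0)
      = ∫⁻ xh in omega2, ∫⁻ y in Ystar L1 L2 G,
          (if cellOK ε L1 L2 xh then f (Fmap ε L1 L2 (kfun ε L1 L2 xh) y) else 0) := by
        rw [Measure.volume_eq_prod, ← Measure.prod_restrict,
          lintegral_prod _ (measurable_integrand hε hL1 hL2 hf).aemeasurable]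
    _ = ∫⁻ xh in omega2, (OK ε L1 L2).indicator
          (fun xh => (ENNReal.ofReal (ε ^ 3))⁻¹
            * ∫⁻ x in Scell ε L1 L2 G (kfun ε L1 L2 xh), f x) xh := by
        exact lintegral_congr fun xh => hinner xh
    _ = ∫⁻ xh in OK ε L1 L2 ∩ omega2, (ENNReal.ofReal (ε ^ 3))⁻¹
          * ∫⁻ x in Scell ε L1 L2 G (kfun ε L1 L2 xh), f x := by
        rw [lintegral_indicator (measurableSet_OK hε hL1 hL2),
          Measure.restrict_restrict (measurableSet_OK hε hL1 hL2)]
    _ = ∫⁻ xh in OK ε L1 L2, (ENNReal.ofReal (ε ^ 3))⁻¹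
          * ∫⁻ x in Scell ε L1 L2 G (kfun ε L1 L2 xh), f x := by
        exact setLIntegral_congr (OK_ae_inter hε hL1 hL2)
    _ = ∑' n : ℤ × ℤ, ∫⁻ xh in Ic ε L1 L2 n, (ENNReal.ofReal (ε ^ 3))⁻¹
          * ∫⁻ x in Scell ε L1 L2 G (kfun ε L1 L2 xh), f x := by
        rw [OK_eq_iUnion hε hL1 hL2,
          lintegral_iUnion (fun n => measurableSet_Ic n) (Ic_disjoint hε hL1 hL2)]
    _ = ∑' n : ℤ × ℤ, C * ∫⁻ x in Sc ε L1 L2 G n, f x := by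
        refine tsum_congr fun n => ?_
        rw [Ic]
        split_ifs with ha
        · have hcong : ∀ xh, xh ∈ Icell ε L1 L2 n →
              (ENNReal.ofReal (ε ^ 3))⁻¹ * ∫⁻ x in Scell ε L1 L2 G (kfun ε L1 L2 xh), f x
              = (ENNReal.ofReal (ε ^ 3))⁻¹ * ∫⁻ x in Scell ε L1 L2 G n, f x := by
            intro xh hxh
            rw [kfun_eq_of_mem_Icell hε hL1 hL2 hxh]
          rw [setLIntegral_congr_fun (measurableSet_Icell n) hcong, setLIntegral_const,
            volume_Icell hε hL1 hL2, Sc, if_pos ha, hC]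
          ring
        · simp [Sc, if_neg ha]
    _ = C * ∫⁻ x in D0 ε L1 L2 G, f x := by
        rw [ENNReal.tsum_mul_left, D0,
          lintegral_iUnion (fun n => measurableSet_Sc hGcont n) (Sc_disjoint hε hL1 hL2)]

end UnfoldAux
namespace UnfoldAux

open scoped ENNReal NNReal

variable {ε L1 L2 : ℝ} {G : V2 → ℝ}

lemma hat_apply0 (x : V3) : hat x 0 = x 0 := rfl
lemma hat_apply1 (x : V3) : hat x 1 = x 1 := rfl

lemma Sc_subset_thinDom0 (hε : 0 < ε) (hL1 : 0 < L1) (hL2 : 0 < L2) (n : ℤ × ℤ) :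
    Sc ε L1 L2 G n ⊆ thinDom0 ε L1 L2 G := by
  intro x hx
  rw [Sc] at hx
  split_ifs at hx with ha
  · obtain ⟨ha1, ha2, ha3, ha4⟩ := ha
    obtain ⟨b1, b2, b3, b4, b5, b6⟩ := hx
    have e1 : (0 : ℝ) ≤ (n.1 : ℝ) := by exact_mod_cast ha1
    have e2 : (0 : ℝ) ≤ (n.2 : ℝ) := by exact_mod_cast ha2
    have hx0 : 0 < x 0 := lt_of_le_of_lt (by positivity) b1
    have hx1 : 0 < x 1 := lt_of_le_of_lt (by positivity) b3
    have hx0' : x 0 < 1 := lt_of_lt_of_le b2 ha3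
    have hx1' : x 1 < 1 := lt_of_lt_of_le b4 ha4
    have hkf : kfun ε L1 L2 (hat x) = n := kfun_eq_of_mem_Scell hε hL1 hL2
      (G := G) ⟨b1, b2, b3, b4, b5, b6⟩
    refine ⟨⟨⟨hx0, hx0', hx1, hx1'⟩, b5, b6⟩, ?_⟩
    rw [cellOK_iff, hkf]
    exact ⟨ha1, ha2, ha3, ha4⟩
  · exact absurd hx (Set.notMem_empty x)

lemma D0_subset_thinDom0 (hε : 0 < ε) (hL1 : 0 < L1) (hL2 : 0 < L2) :
    D0 ε L1 L2 G ⊆ thinDom0 ε L1 L2 G := by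
  intro x hx
  obtain ⟨n, hn⟩ := Set.mem_iUnion.mp hx
  exact Sc_subset_thinDom0 hε hL1 hL2 n hn

lemma D0_subset_thinDom (hε : 0 < ε) (hL1 : 0 < L1) (hL2 : 0 < L2) :
    D0 ε L1 L2 G ⊆ thinDom ε G :=
  fun x hx => (D0_subset_thinDom0 hε hL1 hL2 hx).1

lemma thinDom0_ae_D0 (hε : 0 < ε) (hL1 : 0 < L1) (hL2 : 0 < L2) :
    (thinDom0 ε L1 L2 G : Set V3) =ᵐ[volume] D0 ε L1 L2 G := by
  rw [MeasureTheory.ae_eq_set]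
  constructor
  · have hsub : thinDom0 ε L1 L2 G \ D0 ε L1 L2 G ⊆
        {x : V3 | ∃ m : ℤ, x 0 = ε * L1 * (m : ℝ)} ∪
          {x : V3 | ∃ m : ℤ, x 1 = ε * L2 * (m : ℝ)} := by
      rintro x ⟨⟨hTD, hOKx⟩, hnD⟩
      simp only [Set.mem_union, Set.mem_setOf_eq]
      by_contra hcon
      push_neg at hcon
      obtain ⟨c0, c1⟩ := hcon
      set n := kfun ε L1 L2 (hat x) with hn
      have ha : adm ε L1 L2 n := (cellOK_iff (hat x)).mp hOKx
      obtain ⟨m1, m2, m3, m4⟩ := mem_Icell_kfun hε hL1 hL2 (hat x)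
      rw [hat_apply0] at m1 m2
      rw [hat_apply1] at m3 m4
      obtain ⟨-, h2, h3⟩ := hTD
      apply hnD
      refine Set.mem_iUnion.mpr ⟨n, ?_⟩
      rw [Sc, if_pos ha]
      exact ⟨lt_of_le_of_ne m1 (fun h => c0 n.1 h.symm), m2,
        lt_of_le_of_ne m3 (fun h => c1 n.2 h.symm), m4, h2, h3⟩
    exact measure_mono_null hsub
      (measure_union_null (null_linesZ 0 (ε * L1)) (null_linesZ 1 (ε * L2)))
  · rw [Set.diff_eq_empty.mpr (D0_subset_thinDom0 hε hL1 hL2)]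
    exact measure_empty

end UnfoldAux
open scoped ENNReal NNReal

open UnfoldAux in
/-- Lᵖ norms under unfolding. -/
theorem unfold_Lp_norm
    (ε L1 L2 G0 G1 p : ℝ) (hε : 0 < ε) (hL1 : 0 < L1) (hL2 : 0 < L2) (hG0 : 0 < G0)
    (hp : 1 ≤ p)
    (G : V2 → ℝ) (hGcont : Continuous G) (hGper : Yper L1 L2 G)
    (hGlb : ∀ y, G0 ≤ G y) (hGub : ∀ y, G y ≤ G1)
    (φ : V3 → ℝ)
    (hφ : MemLp φ (ENNReal.ofReal p) (volume.restrict (thinDom ε G))) :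
    MemLp (fun q : V2 × V3 => Tunf ε L1 L2 φ q.1 q.2) (ENNReal.ofReal p)
        (volume.restrict (omega2 ×ˢ Ystar L1 L2 G))
    ∧ (∫ q in omega2 ×ˢ Ystar L1 L2 G, |Tunf ε L1 L2 φ q.1 q.2| ^ p) ^ (1 / p)
        = (L1 * L2) ^ (1 / p) * (ε⁻¹) ^ (1 / p)
            * (∫ x in thinDom0 ε L1 L2 G, |φ x| ^ p) ^ (1 / p)
    ∧ (∫ q in omega2 ×ˢ Ystar L1 L2 G, |Tunf ε L1 L2 φ q.1 q.2| ^ p) ^ (1 / p)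
        ≤ (L1 * L2) ^ (1 / p) * (ε⁻¹) ^ (1 / p)
            * (∫ x in thinDom ε G, |φ x| ^ p) ^ (1 / p) := by
  classical
  have hp0 : (0 : ℝ) < p := lt_of_lt_of_le one_pos hp
  have hP0 : (ENNReal.ofReal p) ≠ 0 := by
    simp only [ne_eq, ENNReal.ofReal_eq_zero, not_le]; exact hp0
  have hPtop : (ENNReal.ofReal p) ≠ ∞ := ENNReal.ofReal_ne_top
  have hPto : (ENNReal.ofReal p).toReal = p := ENNReal.toReal_ofReal hp0.le
  set μP := volume.restrict (omega2 ×ˢ Ystar L1 L2 G) with hμP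
  set Cst : ℝ≥0∞ := ENNReal.ofReal (ε * L1) * ENNReal.ofReal (ε * L2)
    * (ENNReal.ofReal (ε ^ 3))⁻¹ with hCst
  have hCtop : Cst ≠ ∞ := by
    refine ENNReal.mul_ne_top (ENNReal.mul_ne_top ENNReal.ofReal_ne_top
      ENNReal.ofReal_ne_top) (ENNReal.inv_ne_top.mpr ?_)
    simp only [ne_eq, ENNReal.ofReal_eq_zero, not_le]
    positivity
  have hCtoReal : Cst.toReal = L1 * L2 * ε⁻¹ := by
    rw [hCst, ENNReal.toReal_mul, ENNReal.toReal_mul, ENNReal.toReal_inv,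
      ENNReal.toReal_ofReal (by positivity), ENNReal.toReal_ofReal (by positivity),
      ENNReal.toReal_ofReal (by positivity)]
    field_simp
  -- measurable representative
  obtain ⟨g, hgsm, hgae⟩ := hφ.1
  have hgmeas : Measurable g := hgsm.measurable
  obtain ⟨N, hNsub, hNmeas, hN0⟩ := exists_measurable_superset_of_null (ae_iff.mp hgae)
  have hND0 : volume.restrict (D0 ε L1 L2 G) N = 0 := by
    rw [Measure.restrict_apply hNmeas] at hN0 ⊢
    exact measure_mono_null
      (Set.inter_subset_inter Set.Subset.rfl (D0_subset_thinDom hε hL1 hL2)) hN0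
  have hφg_D0 : φ =ᵐ[volume.restrict (D0 ε L1 L2 G)] g := by
    rw [Filter.eventuallyEq_iff_exists_mem]
    exact ⟨{x | φ x = g x}, by
      rw [MeasureTheory.mem_ae_iff]
      exact measure_mono_null (fun x hx => hNsub hx) hND0, fun x hx => hx⟩
  -- measurability of unfolded representative
  have hOKset : MeasurableSet {q : V2 × V3 | cellOK ε L1 L2 q.1} :=
    (measurableSet_OK hε hL1 hL2).preimage measurable_fst
  have hTgmeas : Measurable fun q : V2 × V3 => Tunf ε L1 L2 g q.1 q.2 := by
    have heq : (fun q : V2 × V3 => Tunf ε L1 L2 g q.1 q.2)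
        = fun q : V2 × V3 => if cellOK ε L1 L2 q.1
            then g (Fmap ε L1 L2 (kfun ε L1 L2 q.1) q.2) else 0 :=
      funext fun q => Tunf_eq g q.1 q.2
    rw [heq]
    exact Measurable.ite hOKset (hgmeas.comp measurable_Phi) measurable_const
  -- a.e. equality of the unfoldings
  have hTnull : μP {q : V2 × V3 | cellOK ε L1 L2 q.1
      ∧ Fmap ε L1 L2 (kfun ε L1 L2 q.1) q.2 ∈ N} = 0 := by
    set Tset := {q : V2 × V3 | cellOK ε L1 L2 q.1
      ∧ Fmap ε L1 L2 (kfun ε L1 L2 q.1) q.2 ∈ N} with hTsetdef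
    have hTmeas : MeasurableSet Tset :=
      hOKset.inter (measurable_Phi hNmeas)
    have h1 : ∫⁻ q, Tset.indicator (fun _ => (1 : ℝ≥0∞)) q ∂μP = μP Tset := by
      rw [lintegral_indicator hTmeas, setLIntegral_const, one_mul]
    have h2 : ∫⁻ q, Tset.indicator (fun _ => (1 : ℝ≥0∞)) q ∂μP
        = ∫⁻ q in omega2 ×ˢ Ystar L1 L2 G,
            (if cellOK ε L1 L2 q.1
              then (N.indicator (fun _ => (1 : ℝ≥0∞)))
                (Fmap ε L1 L2 (kfun ε L1 L2 q.1) q.2) else 0) := by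
      refine lintegral_congr fun q => ?_
      by_cases hOKq : cellOK ε L1 L2 q.1
      · rw [if_pos hOKq]
        by_cases hNq : Fmap ε L1 L2 (kfun ε L1 L2 q.1) q.2 ∈ N
        · rw [Set.indicator_of_mem (show q ∈ Tset from ⟨hOKq, hNq⟩),
            Set.indicator_of_mem hNq]
        · rw [Set.indicator_of_notMem (fun hq => hNq hq.2),
            Set.indicator_of_notMem hNq]
      · rw [if_neg hOKq, Set.indicator_of_notMem (fun hq => hOKq hq.1)]
    rw [← h1, h2, main_calc hε hL1 hL2 hGcont hGper (measurable_const.indicator hNmeas)]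
    rw [lintegral_indicator hNmeas, setLIntegral_const, hND0]
    simp
  have hTae : (fun q : V2 × V3 => Tunf ε L1 L2 φ q.1 q.2)
      =ᵐ[μP] (fun q : V2 × V3 => Tunf ε L1 L2 g q.1 q.2) := by
    refine (MeasureTheory.ae_iff).mpr (measure_mono_null ?_ hTnull)
    intro q hq
    simp only [Set.mem_setOf_eq] at hq ⊢
    rw [Tunf_eq φ q.1 q.2, Tunf_eq g q.1 q.2] at hq
    by_cases h : cellOK ε L1 L2 q.1
    · rw [if_pos h, if_pos h] at hq
      exact ⟨h, hNsub hq⟩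
    · rw [if_neg h, if_neg h] at hq
      exact absurd rfl hq
  have hTAESM : AEStronglyMeasurable (fun q : V2 × V3 => Tunf ε L1 L2 φ q.1 q.2) μP :=
    hTgmeas.aestronglyMeasurable.congr hTae.symm
  -- the main lintegral computation
  have hfmeas : Measurable fun x : V3 => ((‖g x‖₊ : ℝ≥0∞)) ^ p :=
    hgmeas.nnnorm.coe_nnreal_ennreal.pow measurable_const
  have hLcalc : (∫⁻ q in omega2 ×ˢ Ystar L1 L2 G, ((‖Tunf ε L1 L2 φ q.1 q.2‖₊ : ℝ≥0∞)) ^ p)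
      = Cst * ∫⁻ x in thinDom0 ε L1 L2 G, ((‖φ x‖₊ : ℝ≥0∞)) ^ p := by
    calc (∫⁻ q in omega2 ×ˢ Ystar L1 L2 G, ((‖Tunf ε L1 L2 φ q.1 q.2‖₊ : ℝ≥0∞)) ^ p)
        = ∫⁻ q in omega2 ×ˢ Ystar L1 L2 G, ((‖Tunf ε L1 L2 g q.1 q.2‖₊ : ℝ≥0∞)) ^ p := by
          refine lintegral_congr_ae (hTae.mono fun q hq => ?_)
          dsimp only at hq ⊢
          rw [hq]
      _ = ∫⁻ q in omega2 ×ˢ Ystar L1 L2 G,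
            (if cellOK ε L1 L2 q.1
              then (fun x => ((‖g x‖₊ : ℝ≥0∞)) ^ p) (Fmap ε L1 L2 (kfun ε L1 L2 q.1) q.2)
              else 0) := by
          refine lintegral_congr fun q => ?_
          rw [Tunf_eq g q.1 q.2]
          by_cases h : cellOK ε L1 L2 q.1
          · rw [if_pos h, if_pos h]
          · rw [if_neg h, if_neg h]
            simp [ENNReal.zero_rpow_of_pos hp0]
      _ = Cst * ∫⁻ x in D0 ε L1 L2 G, ((‖g x‖₊ : ℝ≥0∞)) ^ p :=
          main_calc hε hL1 hL2 hGcont hGper hfmeas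
      _ = Cst * ∫⁻ x in D0 ε L1 L2 G, ((‖φ x‖₊ : ℝ≥0∞)) ^ p := by
          congr 1
          refine lintegral_congr_ae (hφg_D0.mono fun x hx => ?_)
          dsimp only at hx ⊢
          rw [hx]
      _ = Cst * ∫⁻ x in thinDom0 ε L1 L2 G, ((‖φ x‖₊ : ℝ≥0∞)) ^ p := by
          congr 1
          exact (setLIntegral_congr (thinDom0_ae_D0 hε hL1 hL2)).symm
  -- finiteness
  have hφlint : (∫⁻ x in thinDom ε G, ((‖φ x‖₊ : ℝ≥0∞)) ^ p) < ∞ := by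
    have h2 := hφ.2
    rw [eLpNorm_eq_lintegral_rpow_enorm_toReal hP0 hPtop, hPto] at h2
    exact (ENNReal.rpow_lt_top_iff_of_pos (by positivity : (0:ℝ) < 1 / p)).mp h2
  have hT0lint : (∫⁻ x in thinDom0 ε L1 L2 G, ((‖φ x‖₊ : ℝ≥0∞)) ^ p) < ∞ := by
    rw [setLIntegral_congr (thinDom0_ae_D0 hε hL1 hL2)]
    refine lt_of_le_of_lt (lintegral_mono' (Measure.restrict_mono
      (D0_subset_thinDom hε hL1 hL2) le_rfl) le_rfl) hφlint
  have hT0ne : (∫⁻ x in thinDom0 ε L1 L2 G, ((‖φ x‖₊ : ℝ≥0∞)) ^ p) ≠ ∞ := hT0lint.ne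
  -- Part 1 : Memℒp
  have hmem : MemLp (fun q : V2 × V3 => Tunf ε L1 L2 φ q.1 q.2) (ENNReal.ofReal p) μP := by
    refine ⟨hTAESM, ?_⟩
    rw [eLpNorm_eq_lintegral_rpow_enorm_toReal hP0 hPtop, hPto]
    simp only [enorm_eq_nnnorm]
    rw [hLcalc]
    exact ENNReal.rpow_lt_top_of_nonneg (by positivity)
      (ENNReal.mul_ne_top hCtop hT0ne)
  -- Bochner integral identities
  have hpt : ∀ a : ℝ, ENNReal.ofReal (|a| ^ p) = ((‖a‖₊ : ℝ≥0∞)) ^ p := by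
    intro a
    rw [← ENNReal.ofReal_rpow_of_nonneg (abs_nonneg a) hp0.le,
      ← Real.enorm_eq_ofReal_abs, enorm_eq_nnnorm]
  have hIT : (∫ q in omega2 ×ˢ Ystar L1 L2 G, |Tunf ε L1 L2 φ q.1 q.2| ^ p)
      = (Cst * ∫⁻ x in thinDom0 ε L1 L2 G, ((‖φ x‖₊ : ℝ≥0∞)) ^ p).toReal := by
    have hAESMp : AEStronglyMeasurable
        (fun q : V2 × V3 => |Tunf ε L1 L2 φ q.1 q.2| ^ p) μP := by
      have h1 : AEMeasurable (fun q : V2 × V3 => ‖Tunf ε L1 L2 φ q.1 q.2‖ ^ p) μP :=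
        (hTAESM.norm.aemeasurable).pow aemeasurable_const
      exact h1.aestronglyMeasurable.congr
        (Filter.Eventually.of_forall fun q => by simp [Real.norm_eq_abs])
    rw [← hLcalc, ← hμP, MeasureTheory.integral_eq_lintegral_of_nonneg_ae
      (Filter.Eventually.of_forall fun q => by positivity) hAESMp]
    congr 1
    exact lintegral_congr fun q => hpt _
  have hI0 : (∫ x in thinDom0 ε L1 L2 G, |φ x| ^ p)
      = (∫⁻ x in thinDom0 ε L1 L2 G, ((‖φ x‖₊ : ℝ≥0∞)) ^ p).toReal := by
    have hAESM0 : AEStronglyMeasurable φ (volume.restrict (thinDom0 ε L1 L2 G)) := by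
      refine hφ.1.mono_measure (Measure.restrict_mono (fun x hx => hx.1) le_rfl)
    have hAESMp : AEStronglyMeasurable (fun x : V3 => |φ x| ^ p)
        (volume.restrict (thinDom0 ε L1 L2 G)) := by
      have h1 : AEMeasurable (fun x : V3 => ‖φ x‖ ^ p)
          (volume.restrict (thinDom0 ε L1 L2 G)) :=
        (hAESM0.norm.aemeasurable).pow aemeasurable_const
      exact h1.aestronglyMeasurable.congr
        (Filter.Eventually.of_forall fun x => by simp [Real.norm_eq_abs])
    rw [MeasureTheory.integral_eq_lintegral_of_nonneg_ae
      (Filter.Eventually.of_forall fun x => by positivity) hAESMp]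
    congr 1
    exact lintegral_congr fun x => hpt _
  -- the equality of the statement
  have hT0nonneg : (0:ℝ) ≤ (∫⁻ x in thinDom0 ε L1 L2 G,
      ((‖φ x‖₊ : ℝ≥0∞)) ^ p).toReal := ENNReal.toReal_nonneg
  have heqmain : (∫ q in omega2 ×ˢ Ystar L1 L2 G, |Tunf ε L1 L2 φ q.1 q.2| ^ p) ^ (1 / p)
      = (L1 * L2) ^ (1 / p) * (ε⁻¹) ^ (1 / p)
          * (∫ x in thinDom0 ε L1 L2 G, |φ x| ^ p) ^ (1 / p) := by
    rw [hIT, hI0, ENNReal.toReal_mul, hCtoReal,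
      Real.mul_rpow (by positivity) hT0nonneg,
      Real.mul_rpow (by positivity) (by positivity : (0:ℝ) ≤ ε⁻¹)]
  refine ⟨hmem, heqmain, ?_⟩
  -- the inequality
  rw [heqmain]
  have hint : IntegrableOn (fun x : V3 => |φ x| ^ p) (thinDom ε G) volume := by
    have := hφ.integrable_norm_rpow hP0 hPtop
    rw [hPto] at this
    simpa [Real.norm_eq_abs, IntegrableOn] using this
  have hmono : (∫ x in thinDom0 ε L1 L2 G, |φ x| ^ p)
      ≤ ∫ x in thinDom ε G, |φ x| ^ p := by
    refine setIntegral_mono_set hint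
      (Filter.Eventually.of_forall fun x => by positivity)
      (HasSubset.Subset.eventuallyLE fun x hx => hx.1)
  have h0' : (0:ℝ) ≤ ∫ x in thinDom0 ε L1 L2 G, |φ x| ^ p := by
    rw [hI0]; exact hT0nonneg
  have := Real.rpow_le_rpow h0' hmono (by positivity : (0:ℝ) ≤ 1 / p)
  exact mul_le_mul_of_nonneg_left this (by positivity)
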